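/- Let n ≥ 1 and σ² > 0. Suppose each agent i ∈ {1,...,n} minimizes J_i(λ) = c(λᵢ) + F(1/Σⱼλⱼ) over λᵢ ∈ [0, 1/σ²], where c: [0,1/σ²] → ℝ₊ is C², non-decreasing, strictly convex with c(0) = c'(0) = 0, and F: (0,∞) → ℝ₊ is C², non-decreasing, strictly convex, and the cost is +∞ when Σⱼλⱼ = 0. Then the game has a unique Nash equilibrium λ*, and it is symmetric with λᵢ* = λ* > 0 for all i. -/

import Mathlib

open Set Filter Topology

/-- Cost of agent `i` in the homogeneous estimation game: privacy cost `c(λᵢ)` plus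
estimation cost `F(1/Σⱼλⱼ)`, with the convention that the estimation cost is `+∞`
when `Σⱼλⱼ = 0`. -/
noncomputable def gameCost (n : ℕ) (c F : ℝ → ℝ) (i : Fin n) (lam : Fin n → ℝ) : EReal :=
  (c (lam i) : EReal) + (if 0 < ∑ j, lam j then ((F (1 / ∑ j, lam j) : ℝ) : EReal) else ⊤)


lemma foc_right {f : ℝ → ℝ} {x b D : ℝ} (hxb : x < b)
    (hf : HasDerivWithinAt f D (Icc x b) x)
    (hmin : ∀ y ∈ Ioc x b, f x ≤ f y) : 0 ≤ D := by
  have ht := (hasDerivWithinAt_iff_tendsto_slope).mp hf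
  have hsub : Icc x b \ {x} = Ioc x b := by
    ext y; simp [mem_diff, mem_Icc, mem_Ioc, and_comm, lt_iff_le_and_ne, and_assoc, eq_comm]
  rw [hsub] at ht
  have hNB : (𝓝[Ioc x b] x).NeBot := by
    refine mem_closure_iff_nhdsWithin_neBot.mp ?_
    rw [closure_Ioc hxb.ne]; exact ⟨le_refl x, hxb.le⟩
  refine le_of_tendsto_of_tendsto tendsto_const_nhds ht ?_
  filter_upwards [self_mem_nhdsWithin] with y hy
  have : 0 ≤ f y - f x := sub_nonneg.mpr (hmin y hy)
  have hxy : 0 < y - x := sub_pos.mpr hy.1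
  rw [slope_def_field]
  exact div_nonneg this hxy.le

lemma foc_left {f : ℝ → ℝ} {a x D : ℝ} (hax : a < x)
    (hf : HasDerivWithinAt f D (Icc a x) x)
    (hmin : ∀ y ∈ Ico a x, f x ≤ f y) : D ≤ 0 := by
  have ht := (hasDerivWithinAt_iff_tendsto_slope).mp hf
  have hsub : Icc a x \ {x} = Ico a x := by
    ext y; simp [mem_diff, mem_Icc, mem_Ico, lt_iff_le_and_ne]
  rw [hsub] at ht
  have hNB : (𝓝[Ico a x] x).NeBot := by
    refine mem_closure_iff_nhdsWithin_neBot.mp ?_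
    rw [closure_Ico hax.ne]; exact ⟨hax.le, le_refl x⟩
  refine le_of_tendsto_of_tendsto ht tendsto_const_nhds ?_
  filter_upwards [self_mem_nhdsWithin] with y hy
  have h1 : 0 ≤ f y - f x := sub_nonneg.mpr (hmin y hy)
  have hxy : y - x < 0 := sub_neg.mpr hy.2
  rw [slope_def_field]
  exact div_nonpos_of_nonneg_of_nonpos h1 hxy.le

lemma convex_tangent {S : Set ℝ} {f : ℝ → ℝ} {x y D : ℝ} (hf : ConvexOn ℝ S f)
    (hx : x ∈ S) (hy : y ∈ S) (hD : HasDerivWithinAt f D S x) :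
    f x + D * (y - x) ≤ f y := by
  rcases lt_trichotomy x y with h | h | h
  · have hs := hf.le_slope_of_hasDerivWithinAt hx hy h hD
    rw [slope_def_field] at hs
    have h1 : 0 < y - x := sub_pos.mpr h
    have := (le_div_iff₀ h1).mp hs
    linarith
  · simp [h]
  · have hs := hf.slope_le_of_hasDerivWithinAt hy hx h hD
    rw [slope_def_field] at hs
    have h1 : 0 < x - y := sub_pos.mpr h
    have := (div_le_iff₀ h1).mp hs
    linarith

lemma strict_tangent {S : Set ℝ} {f : ℝ → ℝ} {x y D : ℝ} (hf : StrictConvexOn ℝ S f)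
    (hx : x ∈ S) (hy : y ∈ S) (hxy : x ≠ y) (hD : HasDerivWithinAt f D S x) :
    f x + D * (y - x) < f y := by
  rcases lt_or_gt_of_ne hxy with h | h
  · have hs := hf.lt_slope_of_hasDerivWithinAt hx hy h hD
    rw [slope_def_field] at hs
    have h1 : 0 < y - x := sub_pos.mpr h
    have := (lt_div_iff₀ h1).mp hs
    linarith
  · have hs := hf.slope_lt_of_hasDerivWithinAt hy hx h hD
    rw [slope_def_field] at hs
    have h1 : 0 < x - y := sub_pos.mpr h
    have := (div_lt_iff₀ h1).mp hs
    linarith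

lemma inv_tangent {T u : ℝ} (hT : 0 < T) (hu : 0 < u) :
    -(u - T) * ((T:ℝ) ^ 2)⁻¹ ≤ u⁻¹ - T⁻¹ := by
  have key : u⁻¹ - T⁻¹ + (u - T) * ((T:ℝ)^2)⁻¹ = (u - T)^2 / (u * T^2) := by
    field_simp; ring
  nlinarith [sq_nonneg (u - T), div_nonneg (sq_nonneg (u - T)) (by positivity : (0:ℝ) ≤ u * T^2)]

lemma sum_update_eq {n : ℕ} (lam : Fin n → ℝ) (i : Fin n) (μ : ℝ) :
    ∑ j, Function.update lam i μ j = (∑ j, lam j) - lam i + μ := by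
  rw [Finset.sum_update_of_mem (Finset.mem_univ i), ← Finset.sum_erase_eq_sub (Finset.mem_univ i),
    Finset.erase_eq]
  ring

lemma gameCost_pos {n : ℕ} {c F : ℝ → ℝ} {i : Fin n} {lam : Fin n → ℝ}
    (h : 0 < ∑ j, lam j) :
    gameCost n c F i lam = ((c (lam i) + F ((∑ j, lam j)⁻¹) : ℝ) : EReal) := by
  simp [gameCost, h, one_div, EReal.coe_add]

lemma gameCost_top {n : ℕ} {c F : ℝ → ℝ} {i : Fin n} {lam : Fin n → ℝ}
    (h : ¬ 0 < ∑ j, lam j) :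
    gameCost n c F i lam = ⊤ := by
  simp [gameCost, h]

set_option maxHeartbeats 1000000 in
/-- the homogeneous estimation game has a unique Nash equilibrium, and it is
symmetric with `λᵢ* = λ* > 0` for all agents `i`. -/
theorem estimation_game_unique_symmetric_NE
    (n : ℕ) (hn : 1 ≤ n) (σ2 : ℝ) (hσ2 : 0 < σ2) (c F : ℝ → ℝ)
    (hc_smooth : ContDiffOn ℝ 2 c (Icc 0 (1 / σ2)))
    (hc_nonneg : ∀ x ∈ Icc 0 (1 / σ2), 0 ≤ c x)
    (hc_mono : MonotoneOn c (Icc 0 (1 / σ2)))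
    (hc_sconv : StrictConvexOn ℝ (Icc 0 (1 / σ2)) c)
    (hc0 : c 0 = 0) (hc'0 : deriv c 0 = 0)
    (hF_smooth : ContDiffOn ℝ 2 F (Ioi 0))
    (hF_nonneg : ∀ x ∈ Ioi 0, 0 ≤ F x)
    (hF_mono : MonotoneOn F (Ioi 0))
    (hF_sconv : StrictConvexOn ℝ (Ioi 0) F) :
    ∃ lamstar : Fin n → ℝ,
      (∀ i, lamstar i ∈ Icc 0 (1 / σ2)) ∧
      -- `lamstar` is a Nash equilibrium
      (∀ i, ∀ μ ∈ Icc 0 (1 / σ2),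
        gameCost n c F i lamstar ≤ gameCost n c F i (Function.update lamstar i μ)) ∧
      -- it is the unique Nash equilibrium
      (∀ lam' : Fin n → ℝ, (∀ i, lam' i ∈ Icc 0 (1 / σ2)) →
        (∀ i, ∀ μ ∈ Icc 0 (1 / σ2),
          gameCost n c F i lam' ≤ gameCost n c F i (Function.update lam' i μ)) →
        lam' = lamstar) ∧
      -- it is symmetric and strictly positive
      (∃ l : ℝ, 0 < l ∧ ∀ i, lamstar i = l) := by
  have hb : (0:ℝ) < 1 / σ2 := by positivity
  set b : ℝ := 1 / σ2 with hbdef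
  have hUD : UniqueDiffOn ℝ (Icc (0:ℝ) b) := uniqueDiffOn_Icc hb
  have hcd : DifferentiableOn ℝ c (Icc 0 b) := hc_smooth.differentiableOn two_ne_zero
  set dc : ℝ → ℝ := derivWithin c (Icc 0 b) with hdcdef
  have hdcmono : StrictMonoOn dc (Icc 0 b) := hc_sconv.strictMonoOn_derivWithin hcd
  have hcD : ∀ x ∈ Icc (0:ℝ) b, HasDerivWithinAt c (dc x) (Icc 0 b) x :=
    fun x hx => (hcd x hx).hasDerivWithinAt
  -- facts about F
  have hFD : ∀ t : ℝ, 0 < t → HasDerivAt F (deriv F t) t := by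
    intro t ht
    exact ((hF_smooth.contDiffAt (Ioi_mem_nhds ht)).differentiableAt two_ne_zero).hasDerivAt
  have hF'mono : MonotoneOn (deriv F) (Ioi 0) :=
    hF_sconv.convexOn.monotoneOn_deriv (fun x hx => (hFD x hx).differentiableAt)
  have hF'pos : ∀ t : ℝ, 0 < t → 0 < deriv F t := by
    intro t ht
    have h2 : t / 2 ∈ Ioi (0:ℝ) := by simpa using half_pos ht
    have hs := hF_sconv.slope_lt_of_hasDerivAt h2 (mem_Ioi.mpr ht) (by linarith) (hFD t ht)
    rw [slope_def_field] at hs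
    have hnum : 0 ≤ F t - F (t / 2) := sub_nonneg.mpr (hF_mono h2 (mem_Ioi.mpr ht) (by linarith))
    have hden : 0 < t - t / 2 := by linarith
    exact lt_of_le_of_lt (div_nonneg hnum hden.le) hs
  set D' : ℝ → ℝ := fun t => deriv F t⁻¹ * (-((t:ℝ) ^ 2)⁻¹) with hD'def
  have hD'neg : ∀ t : ℝ, 0 < t → D' t < 0 := by
    intro t ht
    have := hF'pos t⁻¹ (by positivity)
    have h2 : (0:ℝ) < ((t:ℝ)^2)⁻¹ := by positivity
    simp only [hD'def]
    nlinarith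
  have hgD : ∀ t : ℝ, 0 < t → HasDerivAt (fun u : ℝ => F u⁻¹) (D' t) t := by
    intro t ht
    exact (hFD t⁻¹ (by positivity)).comp t (hasDerivAt_inv ht.ne')
  -- tangent inequality for g = F ∘ inv
  have hgtan : ∀ T u : ℝ, 0 < T → 0 < u → F T⁻¹ + D' T * (u - T) ≤ F u⁻¹ := by
    intro T u hT hu
    have hFt := convex_tangent hF_sconv.convexOn (mem_Ioi.mpr (by positivity : (0:ℝ) < T⁻¹))
      (mem_Ioi.mpr (by positivity : (0:ℝ) < u⁻¹)) ((hFD T⁻¹ (by positivity)).hasDerivWithinAt)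
    have hit := inv_tangent hT hu
    have hF'nn : 0 ≤ deriv F T⁻¹ := (hF'pos T⁻¹ (by positivity)).le
    have : D' T * (u - T) ≤ deriv F T⁻¹ * (u⁻¹ - T⁻¹) := by
      simp only [hD'def]
      calc deriv F T⁻¹ * (-((T:ℝ)^2)⁻¹) * (u - T)
          = deriv F T⁻¹ * (-(u - T) * ((T:ℝ)^2)⁻¹) := by ring
        _ ≤ deriv F T⁻¹ * (u⁻¹ - T⁻¹) := mul_le_mul_of_nonneg_left hit hF'nn
    linarith
  -- derivative of the per-agent objective
  have hphiD : ∀ x ∈ Icc (0:ℝ) b, ∀ s : ℝ, 0 < x + s →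
      HasDerivWithinAt (fun μ => c μ + F (μ + s)⁻¹) (dc x + D' (x + s)) (Icc 0 b) x := by
    intro x hx s hxs
    have h1 : HasDerivAt (fun μ : ℝ => F (μ + s)⁻¹) (D' (x + s)) x := by
      have := (hgD (x + s) hxs).comp x ((hasDerivAt_id x).add_const s)
      rw [mul_one] at this
      exact this
    exact (hcD x hx).add h1.hasDerivWithinAt
  -- forward: any NE is symmetric with value l satisfying the FOC
  have key_forward : ∀ lam' : Fin n → ℝ, (∀ i, lam' i ∈ Icc 0 b) →
      (∀ i, ∀ μ ∈ Icc 0 b,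
        gameCost n c F i lam' ≤ gameCost n c F i (Function.update lam' i μ)) →
      ∃ l : ℝ, 0 < l ∧ l ≤ b ∧ (∀ i, lam' i = l) ∧
        dc l + D' (n*l) ≤ 0 ∧ (l < b → 0 ≤ dc l + D' (n*l)) := by
    intro lam' hmem hNE
    have i0 : Fin n := ⟨0, hn⟩
    have hT : 0 < ∑ j, lam' j := by
      by_contra hTle
      have hTge : 0 ≤ ∑ j, lam' j := Finset.sum_nonneg (fun j _ => (hmem j).1)
      have hT0 : ∑ j, lam' j = 0 := le_antisymm (not_lt.mp hTle) hTge
      have hi0 : lam' i0 ≤ 0 := by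
        calc lam' i0 ≤ ∑ j, lam' j :=
              Finset.single_le_sum (fun j _ => (hmem j).1) (Finset.mem_univ i0)
          _ = 0 := hT0
      have hupd : 0 < ∑ j, Function.update lam' i0 b j := by
        rw [sum_update_eq, hT0]
        have := (hmem i0).1
        have : lam' i0 = 0 := le_antisymm hi0 this
        rw [this]; simpa using hb
      have hle := hNE i0 b ⟨hb.le, le_rfl⟩
      rw [gameCost_top hTle, gameCost_pos hupd, top_le_iff] at hle
      exact (EReal.coe_ne_top _) hle
    have hmin : ∀ i, ∀ μ ∈ Icc 0 b, 0 < (∑ j, lam' j) - lam' i + μ →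
        c (lam' i) + F ((∑ j, lam' j)⁻¹) ≤
          c μ + F (((∑ j, lam' j) - lam' i + μ))⁻¹ := by
      intro i μ hμ hpos
      have hle := hNE i μ hμ
      have hupd : 0 < ∑ j, Function.update lam' i μ j := by rw [sum_update_eq]; exact hpos
      rw [gameCost_pos hT, gameCost_pos hupd, sum_update_eq, Function.update_self,
        EReal.coe_le_coe_iff] at hle
      exact hle
    have hfocR : ∀ i, lam' i < b → 0 ≤ dc (lam' i) + D' (∑ j, lam' j) := by
      intro i hib
      have hx : lam' i ∈ Icc 0 b := hmem i
      have hxs : lam' i + ((∑ j, lam' j) - lam' i) = ∑ j, lam' j := by ring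
      have hD := hphiD (lam' i) hx ((∑ j, lam' j) - lam' i) (by rw [hxs]; exact hT)
      rw [hxs] at hD
      refine foc_right hib (hD.mono (Icc_subset_Icc hx.1 le_rfl)) ?_
      intro y hy
      have hyI : y ∈ Icc 0 b := ⟨le_trans hx.1 hy.1.le, hy.2⟩
      have h1 := hmin i y hyI (by have := hy.1; linarith)
      have e1 : y + ((∑ j, lam' j) - lam' i) = (∑ j, lam' j) - lam' i + y := by ring
      rw [e1]
      rw [hxs]
      exact h1
    have hfocL : ∀ i, 0 < lam' i → dc (lam' i) + D' (∑ j, lam' j) ≤ 0 := by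
      intro i hx0
      have hx : lam' i ∈ Icc 0 b := hmem i
      have hxs : lam' i + ((∑ j, lam' j) - lam' i) = ∑ j, lam' j := by ring
      have hD := hphiD (lam' i) hx ((∑ j, lam' j) - lam' i) (by rw [hxs]; exact hT)
      rw [hxs] at hD
      have hax : max 0 (lam' i - (∑ j, lam' j)/2) < lam' i :=
        max_lt hx0 (by linarith)
      refine foc_left hax (hD.mono (Icc_subset_Icc (le_max_left _ _) hx.2)) ?_
      intro y hy
      have hyI : y ∈ Icc 0 b := ⟨le_trans (le_max_left _ _) hy.1, le_trans hy.2.le hx.2⟩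
      have hya : lam' i - (∑ j, lam' j)/2 ≤ y := le_trans (le_max_right _ _) hy.1
      have h1 := hmin i y hyI (by linarith)
      have e1 : y + ((∑ j, lam' j) - lam' i) = (∑ j, lam' j) - lam' i + y := by ring
      rw [e1, hxs]
      exact h1
    have hsym : ∀ i j, lam' i = lam' j := by
      have hlt : ∀ i j, ¬ lam' j < lam' i := by
        intro i j hij
        have h1 := hfocL i (lt_of_le_of_lt (hmem j).1 hij)
        have h2 := hfocR j (lt_of_lt_of_le hij (hmem i).2)
        have h3 := hdcmono (hmem j) (hmem i) hij
        linarith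
      intro i j
      exact le_antisymm (not_lt.mp (hlt i j)) (not_lt.mp (hlt j i))
    have hsum : ∑ j, lam' j = n * lam' i0 := by
      rw [Finset.sum_congr rfl (fun j _ => hsym j i0), Finset.sum_const, Finset.card_univ,
        Fintype.card_fin, nsmul_eq_mul]
    have hl0 : 0 < lam' i0 := by
      rw [hsum] at hT
      by_contra hc
      push_neg at hc
      have : (0:ℝ) ≤ (n:ℝ) := Nat.cast_nonneg n
      nlinarith
    refine ⟨lam' i0, hl0, (hmem i0).2, fun i => hsym i i0, ?_, ?_⟩
    · have := hfocL i0 hl0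
      rwa [hsum] at this
    · intro hlb
      have := hfocR i0 hlb
      rwa [hsum] at this
  -- backward: the FOC conditions imply the symmetric profile is a NE
  have key_backward : ∀ l : ℝ, 0 < l → l ≤ b →
      dc l + D' (n*l) ≤ 0 → (l < b → 0 ≤ dc l + D' (n*l)) →
      (∀ i, ∀ μ ∈ Icc 0 b, gameCost n c F i (fun _ => l) ≤
        gameCost n c F i (Function.update (fun _ => l) i μ)) := by
    intro l hl0 hlb hE1 hE2 i μ hμ
    have hlI : l ∈ Icc (0:ℝ) b := ⟨hl0.le, hlb⟩
    have hn1 : (1:ℝ) ≤ (n:ℝ) := by exact_mod_cast hn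
    have hsum : ∑ j : Fin n, (fun _ => l) j = n * l := by
      rw [Finset.sum_const, Finset.card_univ, Fintype.card_fin, nsmul_eq_mul]
    have hT : 0 < (n:ℝ) * l := by nlinarith
    have hTs : 0 < ∑ j : Fin n, (fun _ => l) j := by rw [hsum]; exact hT
    rw [gameCost_pos hTs]
    by_cases hpos : 0 < (∑ j : Fin n, (fun _ => l) j) - l + μ
    · have hupd : 0 < ∑ j, Function.update (fun _ => l) i μ j := by
        rw [sum_update_eq]; exact hpos
      rw [gameCost_pos hupd, sum_update_eq, Function.update_self, EReal.coe_le_coe_iff]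
      rw [hsum] at hpos ⊢
      -- real inequality via tangent lines
      have h1 := convex_tangent hc_sconv.convexOn hlI hμ (hcD l hlI)
      have h2 := hgtan ((n:ℝ)*l) ((n:ℝ)*l - l + μ) hT hpos
      have e1 : ((n:ℝ)*l - l + μ) - n*l = μ - l := by ring
      rw [e1] at h2
      have h3 : 0 ≤ (dc l + D' ((n:ℝ)*l)) * (μ - l) := by
        rcases le_or_gt μ l with h | h
        · have hml : μ - l ≤ 0 := by linarith
          nlinarith
        · have := hE2 (lt_of_lt_of_le h hμ.2)
          exact mul_nonneg this (by linarith)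
      nlinarith
    · rw [gameCost_top (by rw [sum_update_eq]; exact hpos)]
      exact le_top
  have hn1 : (1:ℝ) ≤ (n:ℝ) := by exact_mod_cast hn
  -- D' is monotone nondecreasing on positive reals
  have hD'le : ∀ t1 t2 : ℝ, 0 < t1 → t1 ≤ t2 → D' t1 ≤ D' t2 := by
    intro t1 t2 h1 h12
    have h2 : 0 < t2 := lt_of_lt_of_le h1 h12
    have hi : t2⁻¹ ≤ t1⁻¹ := by gcongr
    have hmn : deriv F t2⁻¹ ≤ deriv F t1⁻¹ :=
      hF'mono (mem_Ioi.mpr (by positivity)) (mem_Ioi.mpr (by positivity)) hi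
    have hp2 : 0 < deriv F t2⁻¹ := hF'pos _ (by positivity)
    have hq : ((t2:ℝ)^2)⁻¹ ≤ ((t1:ℝ)^2)⁻¹ := by gcongr
    have hq2 : 0 < ((t2:ℝ)^2)⁻¹ := by positivity
    simp only [hD'def]
    nlinarith
  -- uniqueness of the FOC solution
  have huniq : ∀ l1 l2 : ℝ, 0 < l1 → l1 ≤ b →
      dc l1 + D' (n*l1) ≤ 0 → (l1 < b → 0 ≤ dc l1 + D' (n*l1)) →
      0 < l2 → l2 ≤ b →
      dc l2 + D' (n*l2) ≤ 0 → (l2 < b → 0 ≤ dc l2 + D' (n*l2)) → l1 = l2 := by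
    have H : ∀ l1 l2 : ℝ, 0 < l1 → l1 ≤ b →
        (l1 < b → 0 ≤ dc l1 + D' (n*l1)) →
        0 < l2 → l2 ≤ b → dc l2 + D' (n*l2) ≤ 0 → ¬ (l1 < l2) := by
      intro l1 l2 h10 h1b hE2a h20 h2b hE1b h12
      have hE2' := hE2a (lt_of_lt_of_le h12 h2b)
      have hdm := hdcmono ⟨h10.le, h1b⟩ ⟨h20.le, h2b⟩ h12
      have hD'm := hD'le ((n:ℝ)*l1) ((n:ℝ)*l2) (by nlinarith) (by nlinarith)
      linarith
    intro l1 l2 h10 h1b hE1a hE2a h20 h2b hE1b hE2b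
    rcases lt_trichotomy l1 l2 with h | h | h
    · exact absurd h (H l1 l2 h10 h1b hE2a h20 h2b hE1b)
    · exact h
    · exact absurd h (H l2 l1 h20 h2b hE2b h10 h1b hE1a)
  -- existence of the FOC solution
  have hF'cont : ContinuousOn (deriv F) (Ioi 0) :=
    hF_smooth.continuousOn_deriv_of_isOpen isOpen_Ioi one_le_two
  have hdccont : ContinuousOn dc (Icc 0 b) :=
    hc_smooth.continuousOn_derivWithin hUD one_le_two
  have hex : ∃ l : ℝ, 0 < l ∧ l ≤ b ∧
      dc l + D' (n*l) ≤ 0 ∧ (l < b → 0 ≤ dc l + D' (n*l)) := by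
    by_cases hψb : dc b + D' ((n:ℝ)*b) ≤ 0
    · exact ⟨b, hb, le_rfl, hψb, fun h => absurd h (lt_irrefl b)⟩
    · push_neg at hψb
      set M := dc b with hMdef
      have hnb : 0 < (n:ℝ)*b := by nlinarith
      set m := deriv F (((n:ℝ)*b)⁻¹) with hmdef
      have hmpos : 0 < m := hF'pos _ (by positivity)
      have habs : 0 < |M| + 1 := by positivity
      set l₀ : ℝ := min (min b 1) (m / ((n:ℝ)^2 * (|M| + 1))) with hl₀def
      have hl₀pos : 0 < l₀ := lt_min (lt_min hb one_pos) (by positivity)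
      have hl₀b : l₀ ≤ b := le_trans (min_le_left _ _) (min_le_left _ _)
      have hnl₀ : 0 < (n:ℝ)*l₀ := by nlinarith
      have hψl₀ : dc l₀ + D' ((n:ℝ)*l₀) < 0 := by
        have h1 : dc l₀ ≤ M := by
          rcases eq_or_lt_of_le hl₀b with h | h
          · rw [h]
          · exact (hdcmono ⟨hl₀pos.le, hl₀b⟩ ⟨hb.le, le_rfl⟩ h).le
        have hgeF' : m ≤ deriv F (((n:ℝ)*l₀)⁻¹) := by
          refine hF'mono (mem_Ioi.mpr (by positivity)) (mem_Ioi.mpr (by positivity)) ?_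
          have hle : (n:ℝ)*l₀ ≤ (n:ℝ)*b :=
            mul_le_mul_of_nonneg_left hl₀b (by positivity)
          exact inv_anti₀ hnl₀ hle
        have hl₀1 : l₀ ≤ 1 := le_trans (min_le_left _ _) (min_le_right _ _)
        have hl₀m : l₀ ≤ m / ((n:ℝ)^2*(|M|+1)) := min_le_right _ _
        have hsq : ((n:ℝ)*l₀)^2 ≤ m/(|M|+1) := by
          have h2 : (n:ℝ)^2 * l₀ ≤ (n:ℝ)^2 * (m / ((n:ℝ)^2*(|M|+1))) :=
            mul_le_mul_of_nonneg_left hl₀m (by positivity)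
          have h3 : (n:ℝ)^2 * (m / ((n:ℝ)^2*(|M|+1))) = m/(|M|+1) := by
            field_simp
          nlinarith
        have hD'bound : D' ((n:ℝ)*l₀) ≤ -(|M|+1) := by
          have hs2 : 0 < ((n:ℝ)*l₀)^2 := by positivity
          have h4 : (|M|+1) * ((n:ℝ)*l₀)^2 ≤ m := by
            calc (|M|+1) * ((n:ℝ)*l₀)^2 ≤ (|M|+1) * (m/(|M|+1)) :=
                  mul_le_mul_of_nonneg_left hsq habs.le
              _ = m := by field_simp
          have h5 : (|M|+1) ≤ m * ((((n:ℝ)*l₀)^2)⁻¹) := by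
            rw [← div_eq_mul_inv, le_div_iff₀ hs2]
            linarith
          have h6 : 0 < ((((n:ℝ)*l₀)^2)⁻¹) := by positivity
          simp only [hD'def]
          nlinarith
        have hMabs : M ≤ |M| := le_abs_self M
        linarith
      have hcont : ContinuousOn (fun l : ℝ => dc l + D' ((n:ℝ)*l)) (Icc l₀ b) := by
        have hne : ∀ x ∈ Icc l₀ b, ((n:ℝ)*x) ≠ 0 := by
          intro x hx
          have : 0 < (n:ℝ)*x := by nlinarith [hx.1]
          exact this.ne'
        have hc1 : ContinuousOn dc (Icc l₀ b) :=
          hdccont.mono (Icc_subset_Icc hl₀pos.le le_rfl)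
        have hc2 : ContinuousOn (fun l : ℝ => deriv F (((n:ℝ)*l)⁻¹)) (Icc l₀ b) := by
          refine hF'cont.comp (ContinuousOn.inv₀
            ((continuous_const.mul continuous_id).continuousOn) hne) ?_
          intro x hx
          have : 0 < (n:ℝ)*x := by nlinarith [hx.1]
          exact mem_Ioi.mpr (by positivity)
        have hc3 : ContinuousOn (fun l : ℝ => -(((((n:ℝ)*l))^2)⁻¹)) (Icc l₀ b) := by
          refine ContinuousOn.neg (ContinuousOn.inv₀
            (((continuous_const.mul continuous_id).pow 2).continuousOn) ?_)
          intro x hx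
          have : 0 < (n:ℝ)*x := by nlinarith [hx.1]
          positivity
        exact hc1.add (hc2.mul hc3)
      have hIVT := intermediate_value_Icc hl₀b hcont
      have h0mem : (0:ℝ) ∈ Icc (dc l₀ + D' ((n:ℝ)*l₀)) (dc b + D' ((n:ℝ)*b)) :=
        ⟨hψl₀.le, hψb.le⟩
      obtain ⟨l, hlmem, hleq⟩ := hIVT h0mem
      exact ⟨l, lt_of_lt_of_le hl₀pos hlmem.1, hlmem.2, le_of_eq hleq, fun _ => ge_of_eq hleq⟩
  -- assemble
  obtain ⟨ls, hls0, hlsb, hE1, hE2⟩ := hex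
  refine ⟨fun _ => ls, fun i => ⟨hls0.le, hlsb⟩,
    key_backward ls hls0 hlsb hE1 hE2, ?_, ⟨ls, hls0, fun _ => rfl⟩⟩
  intro lam' hmem hNE
  obtain ⟨l', h'0, h'b, hsym', hE1', hE2'⟩ := key_forward lam' hmem hNE
  have hll : l' = ls := huniq l' ls h'0 h'b hE1' hE2' hls0 hlsb hE1 hE2
  funext i
  rw [hsym' i, hll]
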